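/- For every natural number n, the cylindrical board 4′×(5+2n) does not admit a fault-free domino tiling. -/
import Mathlib


/-- Adjacency on the cylindrical board `a′ × b` (height `a`, circumference `b`):
cells `(i,j)` and `(i+1,j)` (vertical neighbors) or `(i,j)` and `(i,j+1)` with
addition in `ZMod b` (horizontal neighbors, wrapping around). -/
def cylAdj (a b : ℕ) (c d : Fin a × ZMod b) : Prop :=
  (c.2 = d.2 ∧ ((c.1 : ℕ) + 1 = (d.1 : ℕ) ∨ (d.1 : ℕ) + 1 = (c.1 : ℕ))) ∨
  (c.1 = d.1 ∧ (d.2 = c.2 + 1 ∨ c.2 = d.2 + 1))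

/-- A tiling of the cylindrical board: a set of dominoes (unordered pairs of
adjacent cells) such that every cell belongs to exactly one domino. -/
def cylIsTiling (a b : ℕ) (T : Set (Sym2 (Fin a × ZMod b))) : Prop :=
  (∀ p ∈ T, ∃ c d, cylAdj a b c d ∧ p = s(c, d)) ∧
  (∀ x : Fin a × ZMod b, ∃! p, p ∈ T ∧ x ∈ p)

/-- A tiling of the cylindrical board is fault-free if every horizontal fault-line
(between rows `i` and `i+1`, for `i + 1 < a`) and every vertical fault-line
(between columns `j` and `j+1`, for `j : ZMod b`) is crossed by some domino. -/
def cylFaultFree (a b : ℕ) (T : Set (Sym2 (Fin a × ZMod b))) : Prop :=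
  (∀ i : ℕ, i + 1 < a → ∃ c d : Fin a × ZMod b,
      s(c, d) ∈ T ∧ c.2 = d.2 ∧ (c.1 : ℕ) = i ∧ (d.1 : ℕ) = i + 1) ∧
  (∀ j : ZMod b, ∃ i : Fin a, s((i, j), (i, j + 1)) ∈ T)

/-- The cylindrical board `a′ × b` admits a fault-free domino tiling. -/
def cylFaultFreeTileable (a b : ℕ) : Prop :=
  ∃ T : Set (Sym2 (Fin a × ZMod b)), cylIsTiling a b T ∧ cylFaultFree a b T



lemma even_card_of_invol {α : Type*} [DecidableEq α] (f : α → α)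
    (hinv : ∀ x, f (f x) = x) (hne : ∀ x, f x ≠ x) :
    ∀ S : Finset α, (∀ x ∈ S, f x ∈ S) → Even S.card := by
  intro S
  induction S using Finset.strongInduction with
  | _ S ih =>
    intro hcl
    rcases S.eq_empty_or_nonempty with rfl | ⟨a, ha⟩
    · simp
    · have hfa : f a ∈ S := hcl a ha
      have hne' : a ≠ f a := Ne.symm (hne a)
      have hsub : ({a, f a} : Finset α) ⊆ S := by
        intro x hx
        rcases Finset.mem_insert.mp hx with rfl | hx
        · exact ha
        · rcases Finset.mem_singleton.mp hx with rfl
          exact hfa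
      have hss : S \ {a, f a} ⊂ S := by
        apply Finset.sdiff_ssubset hsub
        simp
      have hcl' : ∀ x ∈ S \ {a, f a}, f x ∈ S \ {a, f a} := by
        intro x hx
        rw [Finset.mem_sdiff] at hx ⊢
        obtain ⟨hxS, hxn⟩ := hx
        simp only [Finset.mem_insert, Finset.mem_singleton] at hxn ⊢
        push_neg at hxn ⊢
        refine ⟨hcl x hxS, ?_, ?_⟩
        · intro hfx; exact hxn.2 (by rw [← hfx, hinv])
        · intro hfx
          have : f (f x) = f (f a) := by rw [hfx]
          rw [hinv, hinv] at this
          exact hxn.1 this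
      obtain ⟨k, hk⟩ := ih _ hss hcl'
      have hcard : S.card = (S \ {a, f a}).card + 2 := by
        have h2 : ({a, f a} : Finset α).card = 2 := Finset.card_pair hne'
        have hle : ({a, f a} : Finset α).card ≤ S.card := Finset.card_le_card hsub
        rw [Finset.card_sdiff_of_subset hsub]
        omega
      exact ⟨k + 1, by omega⟩

lemma region_parity {α : Type*} [DecidableEq α] (f : α → α)
    (hinv : ∀ x, f (f x) = x) (hne : ∀ x, f x ≠ x) (S : Finset α) :
    Even (S.card + (S.filter fun x => f x ∉ S).card) := by
  classical
  have h1 : (S.filter fun x => f x ∈ S).card + (S.filter fun x => f x ∉ S).card = S.card :=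
    Finset.card_filter_add_card_filter_not _
  have h2 : Even (S.filter fun x => f x ∈ S).card := by
    apply even_card_of_invol f hinv hne
    intro x hx
    rw [Finset.mem_filter] at hx ⊢
    exact ⟨hx.2, by rw [hinv]; exact hx.1⟩
  obtain ⟨k, hk⟩ := h2
  exact ⟨(S.filter fun x => f x ∉ S).card + k, by omega⟩

lemma card_eq_of_invol_maps {α : Type*} [DecidableEq α] {f : α → α} (hinv : ∀ x, f (f x) = x)
    {S T : Finset α} (hST : ∀ x ∈ S, f x ∈ T) (hTS : ∀ x ∈ T, f x ∈ S) : S.card = T.card :=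
  Finset.card_nbij' f f hST hTS (fun x _ => hinv x) (fun x _ => hinv x)

lemma card_filter_fst {b : ℕ} [NeZero b] (P : Fin 4 → Prop) [DecidablePred P] :
    (Finset.univ.filter fun x : Fin 4 × ZMod b => P x.1).card = (Finset.univ.filter P).card * b := by
  have h : (Finset.univ.filter fun x : Fin 4 × ZMod b => P x.1)
      = (Finset.univ.filter P) ×ˢ Finset.univ := by
    ext x; simp [Finset.mem_product]
  rw [h, Finset.card_product, Finset.card_univ, ZMod.card]

lemma card_filter_snd {b : ℕ} [NeZero b] (j : ZMod b) :
    (Finset.univ.filter fun x : Fin 4 × ZMod b => x.2 = j).card = 4 := by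
  have h : (Finset.univ.filter fun x : Fin 4 × ZMod b => x.2 = j)
      = Finset.univ ×ˢ ({j} : Finset (ZMod b)) := by
    ext x
    simp only [Finset.mem_filter, Finset.mem_univ, true_and, Finset.mem_product,
      Finset.mem_singleton]
  rw [h, Finset.card_product]
  simp
lemma cylAdj_symm {a b : ℕ} {c d : Fin a × ZMod b} (h : cylAdj a b c d) : cylAdj a b d c := by
  unfold cylAdj at h ⊢
  tauto

lemma cylAdj_ne {a b : ℕ} (hb : 5 ≤ b) {c d : Fin a × ZMod b} (h : cylAdj a b c d) : c ≠ d := by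
  haveI : NeZero b := ⟨by omega⟩
  rintro rfl
  rcases h with ⟨-, h | h⟩ | ⟨-, h | h⟩
  · omega
  · omega
  all_goals
  · have h1 : (1 : ZMod b) = 0 := left_eq_add.mp h
    have h1' : ((1 : ℕ) : ZMod b) = 0 := by exact_mod_cast h1
    have := (ZMod.natCast_eq_zero_iff 1 b).mp h1'
    have := Nat.le_of_dvd (by omega) this
    omega

lemma exists_matching (b : ℕ) (hb : 5 ≤ b) (T : Set (Sym2 (Fin 4 × ZMod b)))
    (hT : cylIsTiling 4 b T) :
    ∃ m : Fin 4 × ZMod b → Fin 4 × ZMod b,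
      (∀ x, cylAdj 4 b x (m x)) ∧ (∀ x, m (m x) = x) ∧
      (∀ x y, s(x, y) ∈ T → m x = y) := by
  classical
  obtain ⟨hT1, hT2⟩ := hT
  choose P hP hPu using hT2
  set m : Fin 4 × ZMod b → Fin 4 × ZMod b := fun x => Sym2.Mem.other' (hP x).2 with hm
  have key : ∀ x, s(x, m x) ∈ T := by
    intro x
    have : s(x, m x) = P x := Sym2.other_spec' (hP x).2
    rw [this]
    exact (hP x).1
  have heq : ∀ x y, s(x, y) ∈ T → m x = y := by
    intro x y hxy
    have hxm : x ∈ s(x, y) := Sym2.mem_mk_left x y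
    have h : s(x, m x) = s(x, y) := by
      have h1 : s(x, m x) = P x := Sym2.other_spec' (hP x).2
      rw [h1, (hPu x s(x, y) ⟨hxy, hxm⟩)]
    rcases Sym2.eq_iff.mp h with ⟨-, h2⟩ | ⟨hxy', h2⟩
    · exact h2
    · rw [h2, hxy']
  refine ⟨m, ?_, fun x => heq (m x) x (by rw [Sym2.eq_swap]; exact key x), heq⟩
  intro x
  obtain ⟨c, d, hcd, hpx⟩ := hT1 _ (key x)
  rcases Sym2.eq_iff.mp hpx with ⟨h1, h2⟩ | ⟨h1, h2⟩
  · subst h1; rw [h2]; exact hcd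
  · subst h1; rw [h2]; exact cylAdj_symm hcd
section Counting

variable {b : ℕ} [NeZero b]

def vSet (m : Fin 4 × ZMod b → Fin 4 × ZMod b) : Finset (Fin 4 × ZMod b) :=
  Finset.univ.filter fun x => (m x).2 = x.2

def hrSet (m : Fin 4 × ZMod b → Fin 4 × ZMod b) : Finset (Fin 4 × ZMod b) :=
  Finset.univ.filter fun x => (m x).1 = x.1 ∧ (m x).2 = x.2 + 1

def hlSet (m : Fin 4 × ZMod b → Fin 4 × ZMod b) : Finset (Fin 4 × ZMod b) :=
  Finset.univ.filter fun x => (m x).1 = x.1 ∧ x.2 = (m x).2 + 1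

def crSet (m : Fin 4 × ZMod b → Fin 4 × ZMod b) (j : ZMod b) : Finset (Fin 4 × ZMod b) :=
  (hrSet m).filter fun x => x.2 = j

def clSet (m : Fin 4 × ZMod b → Fin 4 × ZMod b) (j : ZMod b) : Finset (Fin 4 × ZMod b) :=
  (hlSet m).filter fun x => x.2 = j

def dSet (m : Fin 4 × ZMod b → Fin 4 × ZMod b) (i i' : ℕ) : Finset (Fin 4 × ZMod b) :=
  (vSet m).filter fun x => (x.1 : ℕ) = i ∧ ((m x).1 : ℕ) = i'

lemma zmod_cast_ne_zero (hb : 5 ≤ b) (k : ℕ) (h1 : 0 < k) (h2 : k < b) :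
    ((k : ℕ) : ZMod b) ≠ 0 := by
  intro h
  have := (ZMod.natCast_eq_zero_iff k b).mp h
  have := Nat.le_of_dvd h1 this
  omega

lemma zmod_ne_add_one (hb : 5 ≤ b) (u : ZMod b) : u ≠ u + 1 := by
  intro h
  have h1 : (1 : ZMod b) = 0 := left_eq_add.mp h
  exact zmod_cast_ne_zero hb 1 (by omega) (by omega) (by exact_mod_cast h1)

lemma zmod_ne_add_two (hb : 5 ≤ b) (u : ZMod b) : u ≠ u + 1 + 1 := by
  intro h
  rw [add_assoc] at h
  have h1 : (1 + 1 : ZMod b) = 0 := left_eq_add.mp h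
  have h2 : ((2 : ℕ) : ZMod b) = 0 := by push_cast; linear_combination h1
  exact zmod_cast_ne_zero hb 2 (by omega) (by omega) h2

variable (m : Fin 4 × ZMod b → Fin 4 × ZMod b)

lemma vert_rows (hb : 5 ≤ b) (hadj : ∀ x, cylAdj 4 b x (m x)) (x : Fin 4 × ZMod b)
    (h : (m x).2 = x.2) :
    ((x.1 : ℕ) + 1 = ((m x).1 : ℕ)) ∨ (((m x).1 : ℕ) + 1 = (x.1 : ℕ)) := by
  rcases hadj x with ⟨h1, h2⟩ | ⟨h1, h2⟩
  · exact h2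
  · exfalso
    rcases h2 with h2 | h2
    · exact zmod_ne_add_one hb x.2 (by rw [← h2, h])
    · exact zmod_ne_add_one hb x.2 (by rw [h] at h2; exact h2)

lemma horiz (hb : 5 ≤ b) (hadj : ∀ x, cylAdj 4 b x (m x)) (x : Fin 4 × ZMod b)
    (h : (m x).2 ≠ x.2) :
    (m x).1 = x.1 ∧ ((m x).2 = x.2 + 1 ∨ x.2 = (m x).2 + 1) := by
  rcases hadj x with ⟨h1, h2⟩ | ⟨h1, h2⟩
  · exact absurd h1.symm h
  · exact ⟨h1.symm, h2⟩

end Counting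
section Counting2

variable {b : ℕ} [NeZero b] (m : Fin 4 × ZMod b → Fin 4 × ZMod b)

lemma partition_univ (hb : 5 ≤ b) (hadj : ∀ x, cylAdj 4 b x (m x)) :
    4 * b = (vSet m).card + (hrSet m).card + (hlSet m).card := by
  classical
  have hU : (Finset.univ : Finset (Fin 4 × ZMod b)).card = 4 * b := by
    simp [Finset.card_univ, ZMod.card]
  have e1 : (vSet m).card
      + (Finset.univ.filter fun x => ¬ (m x).2 = x.2).card = 4 * b := by
    rw [← hU]; exact Finset.card_filter_add_card_filter_not _
  set A : Finset (Fin 4 × ZMod b) := Finset.univ.filter fun x => ¬ (m x).2 = x.2 with hA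
  have e2 : (A.filter fun x => (m x).2 = x.2 + 1).card
      + (A.filter fun x => ¬ (m x).2 = x.2 + 1).card = A.card :=
    Finset.card_filter_add_card_filter_not _
  have e3 : A.filter (fun x => (m x).2 = x.2 + 1) = hrSet m := by
    ext x
    simp only [hA, hrSet, Finset.mem_filter, Finset.mem_univ, true_and]
    constructor
    · rintro ⟨hne, hq⟩
      exact ⟨(horiz m hb hadj x hne).1, hq⟩
    · rintro ⟨h1, hq⟩
      refine ⟨?_, hq⟩
      intro hv
      exact zmod_ne_add_one hb x.2 (hv.symm.trans hq)
  have e4 : A.filter (fun x => ¬ (m x).2 = x.2 + 1) = hlSet m := by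
    ext x
    simp only [hA, hlSet, Finset.mem_filter, Finset.mem_univ, true_and]
    constructor
    · rintro ⟨hne, hq⟩
      obtain ⟨h1, h2 | h2⟩ := horiz m hb hadj x hne
      · exact absurd h2 hq
      · exact ⟨h1, h2⟩
    · rintro ⟨h1, hq⟩
      constructor
      · intro hv
        exact zmod_ne_add_one hb (m x).2 (by nth_rewrite 1 [hv]; exact hq)
      · intro hq'
        exact zmod_ne_add_two hb x.2 (by nth_rewrite 1 [hq]; rw [hq'])
  rw [e3, e4] at e2
  omega

lemma hr_card_eq_hl (hinv : ∀ x, m (m x) = x) : (hrSet m).card = (hlSet m).card := by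
  classical
  apply card_eq_of_invol_maps hinv
  · intro x hx
    simp only [hrSet, hlSet, Finset.mem_filter, Finset.mem_univ, true_and] at hx ⊢
    rw [hinv]
    exact ⟨hx.1.symm, hx.2⟩
  · intro x hx
    simp only [hrSet, hlSet, Finset.mem_filter, Finset.mem_univ, true_and] at hx ⊢
    rw [hinv]
    exact ⟨hx.1.symm, hx.2⟩

lemma d_card_symm (hinv : ∀ x, m (m x) = x) (i i' : ℕ) :
    (dSet m i i').card = (dSet m i' i).card := by
  classical
  apply card_eq_of_invol_maps hinv
  all_goals
    intro x hx
    simp only [dSet, vSet, Finset.mem_filter, Finset.mem_univ, true_and] at hx ⊢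
    rw [hinv]
    exact ⟨hx.1.symm, hx.2.2, hx.2.1⟩

lemma v_card_decomp (hb : 5 ≤ b) (hadj : ∀ x, cylAdj 4 b x (m x)) (hinv : ∀ x, m (m x) = x) :
    (vSet m).card = 2 * ((dSet m 0 1).card + (dSet m 1 2).card + (dSet m 2 3).card) := by
  classical
  have hfib : (vSet m).card = ∑ i : Fin 4, ((vSet m).filter fun x => x.1 = i).card :=
    Finset.card_eq_sum_card_fiberwise (fun x _ => Finset.mem_univ x.1)
  have hrows : ∀ x ∈ vSet m,
      ((x.1 : ℕ) + 1 = ((m x).1 : ℕ)) ∨ (((m x).1 : ℕ) + 1 = (x.1 : ℕ)) := by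
    intro x hx
    simp only [vSet, Finset.mem_filter, Finset.mem_univ, true_and] at hx
    exact vert_rows m hb hadj x hx
  have hm4 : ∀ x : Fin 4 × ZMod b, ((m x).1 : ℕ) < 4 := fun x => (m x).1.isLt
  have h0 : (vSet m).filter (fun x => x.1 = 0) = dSet m 0 1 := by
    ext x
    simp only [dSet, Finset.mem_filter]
    constructor
    · rintro ⟨hv, h1⟩
      have := hrows x hv
      have hx0 : (x.1 : ℕ) = 0 := by rw [h1]; rfl
      have := hm4 x
      exact ⟨hv, hx0, by omega⟩
    · rintro ⟨hv, h1, h2⟩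
      exact ⟨hv, Fin.ext h1⟩
  have h3 : (vSet m).filter (fun x => x.1 = 3) = dSet m 3 2 := by
    ext x
    simp only [dSet, Finset.mem_filter]
    constructor
    · rintro ⟨hv, h1⟩
      have := hrows x hv
      have hx0 : (x.1 : ℕ) = 3 := by rw [h1]; rfl
      have := hm4 x
      exact ⟨hv, hx0, by omega⟩
    · rintro ⟨hv, h1, h2⟩
      exact ⟨hv, Fin.ext h1⟩
  have h1 : ((vSet m).filter (fun x => x.1 = 1)).card
      = (dSet m 1 0).card + (dSet m 1 2).card := by
    have hsplit : (((vSet m).filter (fun x => x.1 = 1)).filter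
          fun x => ((m x).1 : ℕ) = 0).card
        + (((vSet m).filter (fun x => x.1 = 1)).filter
          fun x => ¬ ((m x).1 : ℕ) = 0).card
        = ((vSet m).filter (fun x => x.1 = 1)).card :=
      Finset.card_filter_add_card_filter_not _
    have ha : ((vSet m).filter (fun x => x.1 = 1)).filter (fun x => ((m x).1 : ℕ) = 0)
        = dSet m 1 0 := by
      ext x
      simp only [dSet, Finset.mem_filter]
      constructor
      · rintro ⟨⟨hv, h1⟩, h2⟩
        exact ⟨hv, by rw [h1]; rfl, h2⟩
      · rintro ⟨hv, h1, h2⟩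
        exact ⟨⟨hv, Fin.ext h1⟩, h2⟩
    have hb' : ((vSet m).filter (fun x => x.1 = 1)).filter (fun x => ¬ ((m x).1 : ℕ) = 0)
        = dSet m 1 2 := by
      ext x
      simp only [dSet, Finset.mem_filter]
      constructor
      · rintro ⟨⟨hv, h1⟩, h2⟩
        have := hrows x hv
        have hx1 : (x.1 : ℕ) = 1 := by rw [h1]; rfl
        exact ⟨hv, hx1, by omega⟩
      · rintro ⟨hv, h1, h2⟩
        exact ⟨⟨hv, Fin.ext h1⟩, by omega⟩
    rw [ha, hb'] at hsplit
    omega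
  have h2 : ((vSet m).filter (fun x => x.1 = 2)).card
      = (dSet m 2 1).card + (dSet m 2 3).card := by
    have hsplit : (((vSet m).filter (fun x => x.1 = 2)).filter
          fun x => ((m x).1 : ℕ) = 1).card
        + (((vSet m).filter (fun x => x.1 = 2)).filter
          fun x => ¬ ((m x).1 : ℕ) = 1).card
        = ((vSet m).filter (fun x => x.1 = 2)).card :=
      Finset.card_filter_add_card_filter_not _
    have ha : ((vSet m).filter (fun x => x.1 = 2)).filter (fun x => ((m x).1 : ℕ) = 1)
        = dSet m 2 1 := by
      ext x
      simp only [dSet, Finset.mem_filter]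
      constructor
      · rintro ⟨⟨hv, h1⟩, h2⟩
        exact ⟨hv, by rw [h1]; rfl, h2⟩
      · rintro ⟨hv, h1, h2⟩
        exact ⟨⟨hv, Fin.ext h1⟩, h2⟩
    have hb' : ((vSet m).filter (fun x => x.1 = 2)).filter (fun x => ¬ ((m x).1 : ℕ) = 1)
        = dSet m 2 3 := by
      ext x
      simp only [dSet, Finset.mem_filter]
      constructor
      · rintro ⟨⟨hv, h1⟩, h2⟩
        have := hrows x hv
        have hx1 : (x.1 : ℕ) = 2 := by rw [h1]; rfl
        exact ⟨hv, hx1, by omega⟩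
      · rintro ⟨hv, h1, h2⟩
        exact ⟨⟨hv, Fin.ext h1⟩, by omega⟩
    rw [ha, hb'] at hsplit
    omega
  rw [hfib, Fin.sum_univ_four, h0, h1, h2, h3,
    d_card_symm m hinv 1 0, d_card_symm m hinv 2 1, d_card_symm m hinv 3 2]
  ring
end Counting2
section Counting3

variable {b : ℕ} [NeZero b] (m : Fin 4 × ZMod b → Fin 4 × ZMod b)

lemma row_region (hb : 5 ≤ b) (hadj : ∀ x, cylAdj 4 b x (m x)) (hinv : ∀ x, m (m x) = x)
    (hne : ∀ x, m x ≠ x) :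
    Even (b + (dSet m 0 1).card) := by
  classical
  have h := region_parity m hinv hne (Finset.univ.filter fun x : Fin 4 × ZMod b => (x.1 : ℕ) = 0)
  have hc1 : (Finset.univ.filter fun i : Fin 4 => (i : ℕ) = 0).card = 1 := by decide
  have hcard : (Finset.univ.filter fun x : Fin 4 × ZMod b => (x.1 : ℕ) = 0).card = b := by
    rw [card_filter_fst (fun i : Fin 4 => (i : ℕ) = 0), hc1, one_mul]
  have hcr : ((Finset.univ.filter fun x : Fin 4 × ZMod b => (x.1 : ℕ) = 0).filter
      fun x => m x ∉ (Finset.univ.filter fun x : Fin 4 × ZMod b => (x.1 : ℕ) = 0))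
      = dSet m 0 1 := by
    ext x
    simp only [dSet, vSet, Finset.mem_filter, Finset.mem_univ, true_and]
    constructor
    · rintro ⟨h1, h2⟩
      have hvert : (m x).2 = x.2 := by
        by_contra hcon
        have hh := (horiz m hb hadj x hcon).1
        apply h2
        rw [hh]
        exact h1
      have := vert_rows m hb hadj x hvert
      exact ⟨hvert, h1, by omega⟩
    · rintro ⟨hv, h1, h2⟩
      exact ⟨h1, by omega⟩
  rw [hcr, hcard] at h
  exact h

lemma row3_region (hb : 5 ≤ b) (hadj : ∀ x, cylAdj 4 b x (m x)) (hinv : ∀ x, m (m x) = x)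
    (hne : ∀ x, m x ≠ x) :
    Even (b + (dSet m 3 2).card) := by
  classical
  have h := region_parity m hinv hne (Finset.univ.filter fun x : Fin 4 × ZMod b => (x.1 : ℕ) = 3)
  have hc1 : (Finset.univ.filter fun i : Fin 4 => (i : ℕ) = 3).card = 1 := by decide
  have hcard : (Finset.univ.filter fun x : Fin 4 × ZMod b => (x.1 : ℕ) = 3).card = b := by
    rw [card_filter_fst (fun i : Fin 4 => (i : ℕ) = 3), hc1, one_mul]
  have hcr : ((Finset.univ.filter fun x : Fin 4 × ZMod b => (x.1 : ℕ) = 3).filter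
      fun x => m x ∉ (Finset.univ.filter fun x : Fin 4 × ZMod b => (x.1 : ℕ) = 3))
      = dSet m 3 2 := by
    ext x
    simp only [dSet, vSet, Finset.mem_filter, Finset.mem_univ, true_and]
    constructor
    · rintro ⟨h1, h2⟩
      have hvert : (m x).2 = x.2 := by
        by_contra hcon
        have hh := (horiz m hb hadj x hcon).1
        apply h2
        rw [hh]
        exact h1
      have := vert_rows m hb hadj x hvert
      have hm4 : ((m x).1 : ℕ) < 4 := (m x).1.isLt
      exact ⟨hvert, h1, by omega⟩
    · rintro ⟨hv, h1, h2⟩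
      exact ⟨h1, by omega⟩
  rw [hcr, hcard] at h
  exact h

lemma mid_region (hb : 5 ≤ b) (hadj : ∀ x, cylAdj 4 b x (m x)) (hinv : ∀ x, m (m x) = x)
    (hne : ∀ x, m x ≠ x) :
    Even (2 * b + (dSet m 1 2).card) := by
  classical
  have h := region_parity m hinv hne (Finset.univ.filter fun x : Fin 4 × ZMod b => (x.1 : ℕ) ≤ 1)
  have hc1 : (Finset.univ.filter fun i : Fin 4 => (i : ℕ) ≤ 1).card = 2 := by decide
  have hcard : (Finset.univ.filter fun x : Fin 4 × ZMod b => (x.1 : ℕ) ≤ 1).card = 2 * b := by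
    rw [card_filter_fst (fun i : Fin 4 => (i : ℕ) ≤ 1), hc1]
  have hcr : ((Finset.univ.filter fun x : Fin 4 × ZMod b => (x.1 : ℕ) ≤ 1).filter
      fun x => m x ∉ (Finset.univ.filter fun x : Fin 4 × ZMod b => (x.1 : ℕ) ≤ 1))
      = dSet m 1 2 := by
    ext x
    simp only [dSet, vSet, Finset.mem_filter, Finset.mem_univ, true_and]
    constructor
    · rintro ⟨h1, h2⟩
      have h2' : ¬ ((m x).1 : ℕ) ≤ 1 := h2
      have hvert : (m x).2 = x.2 := by
        by_contra hcon
        have hh := (horiz m hb hadj x hcon).1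
        apply h2'
        rw [hh]
        exact h1
      have := vert_rows m hb hadj x hvert
      exact ⟨hvert, by omega, by omega⟩
    · rintro ⟨hv, h1, h2⟩
      exact ⟨by omega, by omega⟩
  rw [hcr, hcard] at h
  exact h

end Counting3
section Counting4

variable {b : ℕ} [NeZero b] (m : Fin 4 × ZMod b → Fin 4 × ZMod b)

lemma cl_card_eq_cr (hinv : ∀ x, m (m x) = x) (j : ZMod b) :
    (clSet m (j + 1)).card = (crSet m j).card := by
  classical
  apply card_eq_of_invol_maps hinv
  · intro x hx
    simp only [clSet, crSet, hlSet, hrSet, Finset.mem_filter, Finset.mem_univ, true_and] at hx ⊢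
    obtain ⟨⟨h1, h2⟩, h3⟩ := hx
    rw [hinv]
    refine ⟨⟨h1.symm, h2⟩, ?_⟩
    have : (m x).2 + 1 = j + 1 := by rw [← h2, h3]
    exact add_right_cancel this
  · intro x hx
    simp only [clSet, crSet, hlSet, hrSet, Finset.mem_filter, Finset.mem_univ, true_and] at hx ⊢
    obtain ⟨⟨h1, h2⟩, h3⟩ := hx
    rw [hinv]
    exact ⟨⟨h1.symm, h2⟩, by rw [h2, h3]⟩

lemma col_region (hb : 5 ≤ b) (hadj : ∀ x, cylAdj 4 b x (m x)) (hinv : ∀ x, m (m x) = x)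
    (hne : ∀ x, m x ≠ x) (j : ZMod b) :
    Even ((crSet m j).card + (crSet m (j + 1)).card) := by
  classical
  set S : Finset (Fin 4 × ZMod b) := Finset.univ.filter fun x => x.2 = j + 1 with hS
  have h := region_parity m hinv hne S
  have hcard : S.card = 4 := card_filter_snd (j + 1)
  set C : Finset (Fin 4 × ZMod b) := S.filter fun x => m x ∉ S with hC
  have e2 : (C.filter fun x => (m x).2 = x.2 + 1).card
      + (C.filter fun x => ¬ (m x).2 = x.2 + 1).card = C.card :=
    Finset.card_filter_add_card_filter_not _
  have e3 : C.filter (fun x => (m x).2 = x.2 + 1) = crSet m (j + 1) := by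
    ext x
    simp only [hC, hS, crSet, hrSet, Finset.mem_filter, Finset.mem_univ, true_and]
    constructor
    · rintro ⟨⟨h1, h2⟩, h3⟩
      have hnv : ¬ (m x).2 = x.2 := by
        intro hv
        exact zmod_ne_add_one hb x.2 (hv.symm.trans h3)
      exact ⟨⟨(horiz m hb hadj x hnv).1, h3⟩, h1⟩
    · rintro ⟨⟨h1, h2⟩, h3⟩
      refine ⟨⟨h3, ?_⟩, h2⟩
      intro hmem
      have : (m x).2 = j + 1 := by
        simpa [hS, Finset.mem_filter] using hmem
      rw [h2, h3] at this
      exact zmod_ne_add_one hb (j + 1) this.symm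
  have e4 : C.filter (fun x => ¬ (m x).2 = x.2 + 1) = clSet m (j + 1) := by
    ext x
    simp only [hC, hS, clSet, hlSet, Finset.mem_filter, Finset.mem_univ, true_and]
    constructor
    · rintro ⟨⟨h1, h2⟩, h3⟩
      have hnv : ¬ (m x).2 = x.2 := fun hv => h2 (hv.trans h1)
      obtain ⟨h4, h5 | h5⟩ := horiz m hb hadj x hnv
      · exact absurd h5 h3
      · exact ⟨⟨h4, h5⟩, h1⟩
    · rintro ⟨⟨h4, h5⟩, h1⟩
      have hne1 : ¬ (m x).2 = x.2 + 1 := by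
        intro hq
        rw [hq] at h5
        exact zmod_ne_add_two hb x.2 h5
      refine ⟨⟨h1, ?_⟩, hne1⟩
      intro hmx
      rw [hmx, ← h1] at h5
      exact zmod_ne_add_one hb x.2 h5
  rw [e3, e4, cl_card_eq_cr m hinv j] at e2
  rw [hcard] at h
  have hC' : Even (4 + C.card) := h
  rw [Nat.even_iff] at hC' ⊢
  omega

lemma hr_card_sum : (hrSet m).card = ∑ j : ZMod b, (crSet m j).card := by
  classical
  exact Finset.card_eq_sum_card_fiberwise (fun x _ => Finset.mem_univ x.2)

end Counting4
/-- For every natural number `n`, the cylindrical board `(4)′ × (5 + 2 * n)`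
does not admit a fault-free domino tiling. -/
theorem cyl_not_faultFree_4'52n :
    ∀ n : ℕ, ¬ cylFaultFreeTileable (4) (5 + 2 * n) := by
  intro n h
  classical
  set b : ℕ := 5 + 2 * n with hbdef
  haveI : NeZero b := ⟨by omega⟩
  have hb : 5 ≤ b := by omega
  obtain ⟨T, hT, hffh, hffv⟩ := h
  obtain ⟨m, hadj, hinv, heq⟩ := exists_matching b hb T hT
  have hne : ∀ x, m x ≠ x := fun x => Ne.symm (cylAdj_ne hb (hadj x))
  have hmain : (hrSet m).card
      + ((dSet m 0 1).card + (dSet m 1 2).card + (dSet m 2 3).card) = 2 * b := by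
    have h1 := partition_univ m hb hadj
    have h2 := hr_card_eq_hl m hinv
    have h3 := v_card_decomp m hb hadj hinv
    omega
  have hd01 := row_region m hb hadj hinv hne
  have hd32 := row3_region m hb hadj hinv hne
  have hd23 : (dSet m 2 3).card = (dSet m 3 2).card := d_card_symm m hinv 2 3
  have hd12 := mid_region m hb hadj hinv hne
  have hbodd : b % 2 = 1 := by omega
  have hHr : (hrSet m).card % 2 = 0 := by
    rw [Nat.even_iff] at hd01 hd32 hd12
    omega
  have hcr_step : ∀ j : ZMod b, ((crSet m j).card + (crSet m (j + 1)).card) % 2 = 0 := by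
    intro j
    have := col_region m hb hadj hinv hne j
    rwa [Nat.even_iff] at this
  have hcr_nat : ∀ k : ℕ, ((crSet m (k : ZMod b)).card + (crSet m 0).card) % 2 = 0 := by
    intro k
    induction k with
    | zero => rw [Nat.cast_zero]; omega
    | succ k ih =>
      have hstep := hcr_step (k : ZMod b)
      push_cast
      omega
  have hcr_all0 : ∀ j : ZMod b, ((crSet m j).card + (crSet m 0).card) % 2 = 0 := by
    intro j
    have hj : ((j.val : ℕ) : ZMod b) = j := ZMod.natCast_zmod_val j
    rw [← hj]
    exact hcr_nat j.val
  have hcr_even : ∀ j : ZMod b, (crSet m j).card % 2 = 0 := by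
    have hsum : ∑ j : ZMod b, ((crSet m j).card + (crSet m 0).card)
        = (hrSet m).card + b * (crSet m 0).card := by
      rw [Finset.sum_add_distrib, ← hr_card_sum m, Finset.sum_const, Finset.card_univ,
        ZMod.card, smul_eq_mul]
    have heven : 2 ∣ ∑ j : ZMod b, ((crSet m j).card + (crSet m 0).card) :=
      Finset.dvd_sum (fun j _ => Nat.dvd_of_mod_eq_zero (hcr_all0 j))
    rw [hsum] at heven
    have hmod := Nat.mul_mod b (crSet m 0).card 2
    rw [hbodd, one_mul] at hmod
    have h0 : (crSet m 0).card % 2 = 0 := by omega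
    intro j
    have := hcr_all0 j
    omega
  have hcr_pos : ∀ j : ZMod b, 1 ≤ (crSet m j).card := by
    intro j
    obtain ⟨i, hi⟩ := hffv j
    have hmx : m (i, j) = (i, j + 1) := heq _ _ hi
    have hmem : (i, j) ∈ crSet m j := by
      simp only [crSet, hrSet, Finset.mem_filter, Finset.mem_univ, true_and, hmx]
    exact Finset.card_pos.mpr ⟨_, hmem⟩
  have hsum2 : 2 * b ≤ ∑ j : ZMod b, (crSet m j).card := by
    calc 2 * b = ∑ _j : ZMod b, 2 := by
          rw [Finset.sum_const, Finset.card_univ, ZMod.card, smul_eq_mul]; ring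
      _ ≤ _ := Finset.sum_le_sum (fun j _ => by
          have h1 := hcr_even j
          have h2 := hcr_pos j
          omega)
  have hHrge : 2 * b ≤ (hrSet m).card := by
    rw [hr_card_sum m]
    exact hsum2
  obtain ⟨c, d, hcd, hc2, hc1, hd1⟩ := hffh 0 (by omega)
  have hmc : m c = d := heq _ _ hcd
  have hcmem : c ∈ dSet m 0 1 := by
    simp only [dSet, vSet, Finset.mem_filter, Finset.mem_univ, true_and, hmc]
    exact ⟨hc2.symm, hc1, by omega⟩
  have hd01pos : 1 ≤ (dSet m 0 1).card := Finset.card_pos.mpr ⟨c, hcmem⟩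
  omega
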